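/- Let M be a model category with pushouts and pullbacks, and let J be the 'walking span' category with three objects a, b, c and exactly two non-identity morphisms b → a and b → c. Then Fun(J, M) admits a model category structure in which a map f : (X_a ← X_b → X_c) ⟶ (Y_a ← Y_b → Y_c) is: a weak equivalence iff f_a, f_b, f_c are weak equivalences in M; a cofibration iff f_a and f_b are cofibrations and the corner map X_c ⊔_{X_b} Y_b → Y_c is a cofibration; and a fibration iff f_a and f_c are fibrations and the induced map X_b → X_a ×_{Y_a} Y_b is a fibration. Moreover, in this model structure an object (X_a ← X_b → X_c) is cofibrant if and only if X_a and X_b are cofibrant and X_b → X_c is a cofibration; and the constant-diagram functor const : M ⥤ Fun(J, M) preserves fibrations and trivial fibrations, so that (when M has pushouts, hence J-shaped colimits) the adjunction colim : Fun(J, M) ⇄ M : const is a Quillen adjunction. (The 'Reedy trick' presenting homotopy pushouts.) -/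

import Mathlib

open CategoryTheory Limits

universe w v u

attribute [local simp] pushout.inl_desc pushout.inr_desc pushout.inl_desc_assoc pushout.inr_desc_assoc
attribute [local simp] pullback.lift_fst pullback.lift_snd pullback.lift_fst_assoc pullback.lift_snd_assoc

namespace Paper

/-- `f` is a retract of `g` in the arrow category. -/
def IsRetract {M : Type u} [Category.{v} M] {a b x y : M} (f : a ⟶ b) (g : x ⟶ y) : Prop :=
  ∃ (i : a ⟶ x) (r : x ⟶ a) (i' : b ⟶ y) (r' : y ⟶ b),
    i ≫ r = 𝟙 a ∧ i' ≫ r' = 𝟙 b ∧ i ≫ g = f ≫ i' ∧ g ≫ r' = r ≫ f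

/-- A (Quillen) model structure on a category `M`: classes of weak equivalences,
cofibrations and fibrations, containing all isomorphisms, with the two-out-of-three
property for weak equivalences, all three classes closed under retracts, the lifting
axioms, and the two factorization axioms. -/
structure ModelStructure (M : Type u) [Category.{v} M] where
  W : MorphismProperty M
  Cof : MorphismProperty M
  Fib : MorphismProperty M
  iso_W : MorphismProperty.isomorphisms M ≤ W
  iso_Cof : MorphismProperty.isomorphisms M ≤ Cof
  iso_Fib : MorphismProperty.isomorphisms M ≤ Fib
  two_of_three : W.HasTwoOutOfThreeProperty
  retract_W : ∀ {a b x y : M} (f : a ⟶ b) (g : x ⟶ y), IsRetract f g → W g → W f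
  retract_Cof : ∀ {a b x y : M} (f : a ⟶ b) (g : x ⟶ y), IsRetract f g → Cof g → Cof f
  retract_Fib : ∀ {a b x y : M} (f : a ⟶ b) (g : x ⟶ y), IsRetract f g → Fib g → Fib f
  lift_Cof_trivFib : ∀ {a b x y : M} (i : a ⟶ b) (p : x ⟶ y),
    Cof i → W p → Fib p → HasLiftingProperty i p
  lift_trivCof_Fib : ∀ {a b x y : M} (i : a ⟶ b) (p : x ⟶ y),
    Cof i → W i → Fib p → HasLiftingProperty i p
  fact_Cof_trivFib : ∀ {x y : M} (f : x ⟶ y),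
    ∃ (z : M) (i : x ⟶ z) (p : z ⟶ y), Cof i ∧ W p ∧ Fib p ∧ i ≫ p = f
  fact_trivCof_Fib : ∀ {x y : M} (f : x ⟶ y),
    ∃ (z : M) (i : x ⟶ z) (p : z ⟶ y), Cof i ∧ W i ∧ Fib p ∧ i ≫ p = f

variable {M : Type u} [Category.{v} M]

/-- An object is cofibrant if the map from the initial object to it is a cofibration. -/
def ModelStructure.Cofibrant [HasInitial M] (S : ModelStructure M) (x : M) : Prop :=
  S.Cof (initial.to x)

/-- An object is fibrant if the map from it to the terminal object is a fibration. -/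
def ModelStructure.Fibrant [HasTerminal M] (S : ModelStructure M) (x : M) : Prop :=
  S.Fib (terminal.from x)

end Paper

namespace Paper

variable {M : Type u} [Category.{v} M]

/-- For a map `f : X ⟶ Y` of span-shaped diagrams, the corner map
`X_c ⊔_{X_b} Y_b ⟶ Y_c` (where `b` is the central object and `b → c` the right leg). -/
noncomputable def spanCofCorner [HasPushouts M] {X Y : WalkingSpan ⥤ M} (f : X ⟶ Y) :
    pushout (X.map WalkingSpan.Hom.snd) (f.app WalkingSpan.zero) ⟶
      Y.obj WalkingSpan.right :=
  pushout.desc (f.app WalkingSpan.right) (Y.map WalkingSpan.Hom.snd)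
    (f.naturality WalkingSpan.Hom.snd)

/-- For a map `f : X ⟶ Y` of span-shaped diagrams, the induced map
`X_b ⟶ X_a ×_{Y_a} Y_b` (where `b` is the central object and `b → a` the left leg). -/
noncomputable def spanFibCorner [HasPullbacks M] {X Y : WalkingSpan ⥤ M} (f : X ⟶ Y) :
    X.obj WalkingSpan.zero ⟶
      pullback (f.app WalkingSpan.left) (Y.map WalkingSpan.Hom.fst) :=
  pullback.lift (X.map WalkingSpan.Hom.fst) (f.app WalkingSpan.zero)
    (f.naturality WalkingSpan.Hom.fst)

end Paper

namespace Paper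

open WalkingSpan

variable {M : Type u} [Category.{v} M]

/-! ### Generic lemmas -/

lemma isRetract_id_of_isIso {a b : M} (f : a ⟶ b) [IsIso f] : IsRetract f (𝟙 a) :=
  ⟨𝟙 a, 𝟙 a, inv f, f, by simp, by simp, by simp, by simp⟩

lemma isIso_of_isInitial {A B : M} (hA : IsInitial A) (hB : IsInitial B) (f : A ⟶ B) :
    IsIso f :=
  ⟨hB.to A, hA.hom_ext _ _, hB.hom_ext _ _⟩

lemma hasLiftingProperty_pushout_inl [HasPushouts M] {A B C' x y : M}
    (f : A ⟶ B) (g : A ⟶ C') (p : x ⟶ y) [HasLiftingProperty g p] :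
    HasLiftingProperty (pushout.inl f g) p := by
  constructor
  intro u v sq
  have sq' : CommSq (f ≫ u) g p (pushout.inr f g ≫ v) := ⟨by
    rw [Category.assoc, sq.w, ← Category.assoc, ← Category.assoc, pushout.condition]⟩
  refine ⟨⟨⟨pushout.desc u sq'.lift (by rw [sq'.fac_left]), by simp, ?_⟩⟩⟩
  apply pushout.hom_ext
  · simpa using sq.w
  · simpa using sq'.fac_right

lemma hasLiftingProperty_pullback_snd [HasPullbacks M] {X' Y' Z' a b : M}
    (f : X' ⟶ Z') (g : Y' ⟶ Z') (i : a ⟶ b) [HasLiftingProperty i f] :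
    HasLiftingProperty i (pullback.snd f g) := by
  constructor
  intro u v sq
  have sq' : CommSq (u ≫ pullback.fst f g) i f (v ≫ g) := ⟨by
    rw [Category.assoc, pullback.condition, ← Category.assoc, sq.w, Category.assoc]⟩
  refine ⟨⟨⟨pullback.lift sq'.lift v (by rw [sq'.fac_right]), ?_, by simp⟩⟩⟩
  apply pullback.hom_ext
  · simpa using sq'.fac_left
  · simpa using sq.w.symm

lemma isIso_pushout_inr_of_isIso [HasPushouts M] {A B C' : M} (f : A ⟶ B) (g : A ⟶ C')
    [IsIso f] : IsIso (pushout.inr f g) := by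
  refine ⟨pushout.desc (inv f ≫ g) (𝟙 _) (by simp), by simp, ?_⟩
  apply pushout.hom_ext
  · rw [pushout.inl_desc_assoc, Category.comp_id, Category.assoc, ← pushout.condition,
      IsIso.inv_hom_id_assoc]
  · simp

lemma isIso_pullback_fst_of_isIso [HasPullbacks M] {X' Y' Z' : M} (f : X' ⟶ Z') (g : Y' ⟶ Z')
    [IsIso g] : IsIso (pullback.fst f g) := by
  refine ⟨pullback.lift (𝟙 _) (f ≫ inv g) (by simp), ?_, by simp⟩
  apply pullback.hom_ext
  · simp
  · rw [Category.assoc, pullback.lift_snd, Category.id_comp, ← Category.assoc,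
      pullback.condition, Category.assoc, IsIso.hom_inv_id, Category.comp_id]

/-! ### Lemmas about a model structure `S` -/

namespace ModelStructure

variable (S : ModelStructure M)

lemma cof_of_isIso {a b : M} (f : a ⟶ b) [IsIso f] : S.Cof f :=
  S.iso_Cof _ ‹IsIso f›

lemma fib_of_isIso {a b : M} (f : a ⟶ b) [IsIso f] : S.Fib f :=
  S.iso_Fib _ ‹IsIso f›

lemma w_of_isIso {a b : M} (f : a ⟶ b) [IsIso f] : S.W f :=
  S.iso_W _ ‹IsIso f›

lemma cof_of_llp {a b : M} (i : a ⟶ b)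
    (h : ∀ {x y : M} (p : x ⟶ y), S.W p → S.Fib p → HasLiftingProperty i p) : S.Cof i := by
  obtain ⟨z, j, q, hj, hq1, hq2, hfac⟩ := S.fact_Cof_trivFib i
  haveI := h q hq1 hq2
  have sq : CommSq j i q (𝟙 b) := ⟨by simp [hfac]⟩
  exact S.retract_Cof i j ⟨𝟙 a, 𝟙 a, sq.lift, q, by simp, sq.fac_right,
    by simp [sq.fac_left], by simp [hfac]⟩ hj

lemma trivCof_of_llp {a b : M} (i : a ⟶ b)
    (h : ∀ {x y : M} (p : x ⟶ y), S.Fib p → HasLiftingProperty i p) : S.Cof i ∧ S.W i := by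
  obtain ⟨z, j, q, hj, hj', hq, hfac⟩ := S.fact_trivCof_Fib i
  haveI := h q hq
  have sq : CommSq j i q (𝟙 b) := ⟨by simp [hfac]⟩
  have hr : IsRetract i j := ⟨𝟙 a, 𝟙 a, sq.lift, q, by simp, sq.fac_right,
    by simp [sq.fac_left], by simp [hfac]⟩
  exact ⟨S.retract_Cof i j hr hj, S.retract_W i j hr hj'⟩

lemma fib_of_rlp {x y : M} (p : x ⟶ y)
    (h : ∀ {a b : M} (i : a ⟶ b), S.Cof i → S.W i → HasLiftingProperty i p) : S.Fib p := by
  obtain ⟨z, j, q, hj, hj', hq, hfac⟩ := S.fact_trivCof_Fib p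
  haveI := h j hj hj'
  have sq : CommSq (𝟙 x) j p q := ⟨by simp [hfac]⟩
  exact S.retract_Fib p q ⟨j, sq.lift, 𝟙 y, 𝟙 y, sq.fac_left, by simp,
    by simp [hfac], by simp [sq.fac_right]⟩ hq

lemma trivFib_of_rlp {x y : M} (p : x ⟶ y)
    (h : ∀ {a b : M} (i : a ⟶ b), S.Cof i → HasLiftingProperty i p) : S.Fib p ∧ S.W p := by
  obtain ⟨z, j, q, hj, hq1, hq2, hfac⟩ := S.fact_Cof_trivFib p
  haveI := h j hj
  have sq : CommSq (𝟙 x) j p q := ⟨by simp [hfac]⟩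
  have hr : IsRetract p q := ⟨j, sq.lift, 𝟙 y, 𝟙 y, sq.fac_left, by simp,
    by simp [hfac], by simp [sq.fac_right]⟩
  exact ⟨S.retract_Fib p q hr hq2, S.retract_W p q hr hq1⟩

lemma cof_comp {a b c : M} (f : a ⟶ b) (g : b ⟶ c) (hf : S.Cof f) (hg : S.Cof g) :
    S.Cof (f ≫ g) :=
  S.cof_of_llp _ (fun p hw hfib => by
    haveI := S.lift_Cof_trivFib f p hf hw hfib
    haveI := S.lift_Cof_trivFib g p hg hw hfib
    infer_instance)

lemma trivCof_comp {a b c : M} (f : a ⟶ b) (g : b ⟶ c) (hf : S.Cof f) (hf' : S.W f)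
    (hg : S.Cof g) (hg' : S.W g) : S.Cof (f ≫ g) ∧ S.W (f ≫ g) :=
  S.trivCof_of_llp _ (fun p hfib => by
    haveI := S.lift_trivCof_Fib f p hf hf' hfib
    haveI := S.lift_trivCof_Fib g p hg hg' hfib
    infer_instance)

lemma fib_comp {a b c : M} (f : a ⟶ b) (g : b ⟶ c) (hf : S.Fib f) (hg : S.Fib g) :
    S.Fib (f ≫ g) :=
  S.fib_of_rlp _ (fun i hc hw => by
    haveI := S.lift_trivCof_Fib i f hc hw hf
    haveI := S.lift_trivCof_Fib i g hc hw hg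
    infer_instance)

lemma trivFib_comp {a b c : M} (f : a ⟶ b) (g : b ⟶ c) (hf : S.Fib f) (hf' : S.W f)
    (hg : S.Fib g) (hg' : S.W g) : S.Fib (f ≫ g) ∧ S.W (f ≫ g) :=
  S.trivFib_of_rlp _ (fun i hc => by
    haveI := S.lift_Cof_trivFib i f hc hf' hf
    haveI := S.lift_Cof_trivFib i g hc hg' hg
    infer_instance)

lemma trivCof_pushout_inl [HasPushouts M] {A B C' : M} (f : A ⟶ B) (g : A ⟶ C')
    (hg : S.Cof g) (hg' : S.W g) : S.Cof (pushout.inl f g) ∧ S.W (pushout.inl f g) :=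
  S.trivCof_of_llp _ (fun p hfib => by
    haveI := S.lift_trivCof_Fib g p hg hg' hfib
    exact hasLiftingProperty_pushout_inl f g p)

lemma cof_pushout_inl [HasPushouts M] {A B C' : M} (f : A ⟶ B) (g : A ⟶ C')
    (hg : S.Cof g) : S.Cof (pushout.inl f g) :=
  S.cof_of_llp _ (fun p hw hfib => by
    haveI := S.lift_Cof_trivFib g p hg hw hfib
    exact hasLiftingProperty_pushout_inl f g p)

lemma trivFib_pullback_snd [HasPullbacks M] {X' Y' Z' : M} (f : X' ⟶ Z') (g : Y' ⟶ Z')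
    (hf : S.Fib f) (hf' : S.W f) : S.Fib (pullback.snd f g) ∧ S.W (pullback.snd f g) :=
  S.trivFib_of_rlp _ (fun i hc => by
    haveI := S.lift_Cof_trivFib i f hc hf' hf
    exact hasLiftingProperty_pullback_snd f g i)

lemma fib_pullback_snd [HasPullbacks M] {X' Y' Z' : M} (f : X' ⟶ Z') (g : Y' ⟶ Z')
    (hf : S.Fib f) : S.Fib (pullback.snd f g) :=
  S.fib_of_rlp _ (fun i hc hw => by
    haveI := S.lift_trivCof_Fib i f hc hw hf
    exact hasLiftingProperty_pullback_snd f g i)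

end ModelStructure

end Paper

namespace Paper

variable {M : Type u} [Category.{v} M]

/-! ### Natural transformations between span-shaped diagrams -/

/-- Construct a natural transformation between span-shaped diagrams from components. -/
def mkNatTrans {X Y : WalkingSpan ⥤ M}
    (fa : X.obj WalkingSpan.left ⟶ Y.obj WalkingSpan.left)
    (fb : X.obj WalkingSpan.zero ⟶ Y.obj WalkingSpan.zero)
    (fc : X.obj WalkingSpan.right ⟶ Y.obj WalkingSpan.right)
    (h1 : X.map WalkingSpan.Hom.fst ≫ fa = fb ≫ Y.map WalkingSpan.Hom.fst)
    (h2 : X.map WalkingSpan.Hom.snd ≫ fc = fb ≫ Y.map WalkingSpan.Hom.snd) : X ⟶ Y where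
  app j := match j with
    | Option.none => fb
    | Option.some WalkingPair.left => fa
    | Option.some WalkingPair.right => fc
  naturality := by
    rintro _ _ (_ | j)
    · simp only [WidePushoutShape.hom_id, CategoryTheory.Functor.map_id, Category.id_comp,
        Category.comp_id]
    · cases j
      · exact h1
      · exact h2

@[simp] lemma mkNatTrans_app_left {X Y : WalkingSpan ⥤ M} (fa fb fc h1 h2) :
    (mkNatTrans (X := X) (Y := Y) fa fb fc h1 h2).app WalkingSpan.left = fa := rfl

@[simp] lemma mkNatTrans_app_zero {X Y : WalkingSpan ⥤ M} (fa fb fc h1 h2) :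
    (mkNatTrans (X := X) (Y := Y) fa fb fc h1 h2).app WalkingSpan.zero = fb := rfl

@[simp] lemma mkNatTrans_app_right {X Y : WalkingSpan ⥤ M} (fa fb fc h1 h2) :
    (mkNatTrans (X := X) (Y := Y) fa fb fc h1 h2).app WalkingSpan.right = fc := rfl

lemma IsRetract.app {X Y X' Y' : WalkingSpan ⥤ M} {f : X ⟶ Y} {g : X' ⟶ Y'}
    (h : IsRetract f g) (j : WalkingSpan) : IsRetract (f.app j) (g.app j) := by
  obtain ⟨i, r, i', r', h1, h2, h3, h4⟩ := h
  exact ⟨i.app j, r.app j, i'.app j, r'.app j,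
    by simpa using NatTrans.congr_app h1 j, by simpa using NatTrans.congr_app h2 j,
    by simpa using NatTrans.congr_app h3 j, by simpa using NatTrans.congr_app h4 j⟩

/-! ### Functoriality of the corner maps -/

section Corners

variable [HasPushouts M] [HasPullbacks M]

/-- Functoriality of the pushout corner. -/
noncomputable def cofCornerMap {X Y X' Y' : WalkingSpan ⥤ M}
    {f : X ⟶ Y} {g : X' ⟶ Y'} (α : X ⟶ X') (β : Y ⟶ Y') (h : α ≫ g = f ≫ β) :
    pushout (X.map WalkingSpan.Hom.snd) (f.app WalkingSpan.zero) ⟶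
      pushout (X'.map WalkingSpan.Hom.snd) (g.app WalkingSpan.zero) :=
  pushout.desc (α.app WalkingSpan.right ≫ pushout.inl _ _)
    (β.app WalkingSpan.zero ≫ pushout.inr _ _) (by
      have h0 := NatTrans.congr_app h WalkingSpan.zero
      simp only [NatTrans.comp_app] at h0
      rw [← Category.assoc, α.naturality, Category.assoc, pushout.condition,
        ← Category.assoc, h0, Category.assoc])

lemma cofCornerMap_corner {X Y X' Y' : WalkingSpan ⥤ M}
    {f : X ⟶ Y} {g : X' ⟶ Y'} (α : X ⟶ X') (β : Y ⟶ Y') (h : α ≫ g = f ≫ β) :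
    cofCornerMap α β h ≫ spanCofCorner g = spanCofCorner f ≫ β.app WalkingSpan.right := by
  have h2 := NatTrans.congr_app h WalkingSpan.right
  simp only [NatTrans.comp_app] at h2
  apply pushout.hom_ext
  · simpa [cofCornerMap, spanCofCorner] using h2
  · simpa [cofCornerMap, spanCofCorner] using (β.naturality WalkingSpan.Hom.snd).symm

lemma isRetract_spanCofCorner {X Y X' Y' : WalkingSpan ⥤ M} {f : X ⟶ Y} {g : X' ⟶ Y'}
    (h : IsRetract f g) : IsRetract (spanCofCorner f) (spanCofCorner g) := by
  obtain ⟨α, ρ, α', ρ', h1, h2, h3, h4⟩ := h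
  have e1 := NatTrans.congr_app h1 WalkingSpan.right
  have e2 := NatTrans.congr_app h2 WalkingSpan.zero
  have e3 := NatTrans.congr_app h2 WalkingSpan.right
  simp only [NatTrans.comp_app, NatTrans.id_app] at e1 e2 e3
  refine ⟨cofCornerMap α α' h3, cofCornerMap ρ ρ' h4.symm, α'.app WalkingSpan.right,
    ρ'.app WalkingSpan.right, ?_, e3, cofCornerMap_corner α α' h3,
    (cofCornerMap_corner ρ ρ' h4.symm).symm⟩
  apply pushout.hom_ext
  · simp [cofCornerMap, reassoc_of% e1]
  · simp [cofCornerMap, reassoc_of% e2]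

/-- Functoriality of the pullback corner. -/
noncomputable def fibCornerMap {X Y X' Y' : WalkingSpan ⥤ M}
    {f : X ⟶ Y} {g : X' ⟶ Y'} (α : X ⟶ X') (β : Y ⟶ Y') (h : α ≫ g = f ≫ β) :
    pullback (f.app WalkingSpan.left) (Y.map WalkingSpan.Hom.fst) ⟶
      pullback (g.app WalkingSpan.left) (Y'.map WalkingSpan.Hom.fst) :=
  pullback.lift (pullback.fst _ _ ≫ α.app WalkingSpan.left)
    (pullback.snd _ _ ≫ β.app WalkingSpan.zero) (by
      have h0 := NatTrans.congr_app h WalkingSpan.left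
      simp only [NatTrans.comp_app] at h0
      rw [Category.assoc, h0, ← Category.assoc, pullback.condition, Category.assoc,
        β.naturality, ← Category.assoc, Category.assoc])

lemma fibCornerMap_corner {X Y X' Y' : WalkingSpan ⥤ M}
    {f : X ⟶ Y} {g : X' ⟶ Y'} (α : X ⟶ X') (β : Y ⟶ Y') (h : α ≫ g = f ≫ β) :
    spanFibCorner f ≫ fibCornerMap α β h = α.app WalkingSpan.zero ≫ spanFibCorner g := by
  have h0 := NatTrans.congr_app h WalkingSpan.zero
  simp only [NatTrans.comp_app] at h0
  apply pullback.hom_ext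
  · simpa [fibCornerMap, spanFibCorner] using (α.naturality WalkingSpan.Hom.fst).symm
  · simpa [fibCornerMap, spanFibCorner] using h0.symm

lemma isRetract_spanFibCorner {X Y X' Y' : WalkingSpan ⥤ M} {f : X ⟶ Y} {g : X' ⟶ Y'}
    (h : IsRetract f g) : IsRetract (spanFibCorner f) (spanFibCorner g) := by
  obtain ⟨α, ρ, α', ρ', h1, h2, h3, h4⟩ := h
  have e1 := NatTrans.congr_app h1 WalkingSpan.left
  have e2 := NatTrans.congr_app h2 WalkingSpan.zero
  have e0 := NatTrans.congr_app h1 WalkingSpan.zero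
  simp only [NatTrans.comp_app, NatTrans.id_app] at e1 e2 e0
  refine ⟨α.app WalkingSpan.zero, ρ.app WalkingSpan.zero, fibCornerMap α α' h3,
    fibCornerMap ρ ρ' h4.symm, e0, ?_, (fibCornerMap_corner α α' h3).symm,
    fibCornerMap_corner ρ ρ' h4.symm⟩
  apply pullback.hom_ext
  · simp [fibCornerMap, e1]
  · simp [fibCornerMap, e2]

end Corners

end Paper

namespace Paper

variable {M : Type u} [Category.{v} M] [HasPushouts M] [HasPullbacks M]

/-- Componentwise weak equivalences on span diagrams. -/
def TW (S : ModelStructure M) : MorphismProperty (WalkingSpan ⥤ M) :=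
  fun _ _ f => ∀ j, S.W (f.app j)

/-- Reedy cofibrations on span diagrams. -/
def TCof (S : ModelStructure M) : MorphismProperty (WalkingSpan ⥤ M) :=
  fun _ _ f => S.Cof (f.app WalkingSpan.left) ∧ S.Cof (f.app WalkingSpan.zero) ∧
    S.Cof (spanCofCorner f)

/-- Reedy fibrations on span diagrams. -/
def TFib (S : ModelStructure M) : MorphismProperty (WalkingSpan ⥤ M) :=
  fun _ _ f => S.Fib (f.app WalkingSpan.left) ∧ S.Fib (f.app WalkingSpan.right) ∧
    S.Fib (spanFibCorner f)

variable (S : ModelStructure M)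

lemma ModelStructure.spanCofCorner_w {X Y : WalkingSpan ⥤ M} (i : X ⟶ Y) (h : TCof S i)
    (hz : S.W (i.app WalkingSpan.zero)) (hr : S.W (i.app WalkingSpan.right)) :
    S.W (spanCofCorner i) := by
  haveI := S.two_of_three
  obtain ⟨hinl, hinl'⟩ :=
    S.trivCof_pushout_inl (X.map WalkingSpan.Hom.snd) (i.app WalkingSpan.zero) h.2.1 hz
  have e : pushout.inl _ _ ≫ spanCofCorner i = i.app WalkingSpan.right := by
    simp [spanCofCorner]
  exact S.W.of_precomp _ _ hinl' (by rw [e]; exact hr)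

lemma ModelStructure.spanFibCorner_w {X Y : WalkingSpan ⥤ M} (p : X ⟶ Y) (h : TFib S p)
    (hl : S.W (p.app WalkingSpan.left)) (hz : S.W (p.app WalkingSpan.zero)) :
    S.W (spanFibCorner p) := by
  haveI := S.two_of_three
  obtain ⟨hsnd, hsnd'⟩ :=
    S.trivFib_pullback_snd (p.app WalkingSpan.left) (Y.map WalkingSpan.Hom.fst) h.1 hl
  have e : spanFibCorner p ≫ pullback.snd _ _ = p.app WalkingSpan.zero := by
    simp [spanFibCorner]
  exact S.W.of_postcomp _ _ hsnd' (by rw [e]; exact hz)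

/-- The Reedy-style lifting construction for span diagrams. -/
lemma T_hasLiftingProperty {A B X Y : WalkingSpan ⥤ M} (i : A ⟶ B) (p : X ⟶ Y)
    (hla : HasLiftingProperty (i.app WalkingSpan.left) (p.app WalkingSpan.left))
    (hlb : HasLiftingProperty (i.app WalkingSpan.zero) (spanFibCorner p))
    (hlc : HasLiftingProperty (spanCofCorner i) (p.app WalkingSpan.right)) :
    HasLiftingProperty i p := by
  constructor
  intro u v sq
  have wl : ∀ j, u.app j ≫ p.app j = i.app j ≫ v.app j := fun j => by
    simpa using NatTrans.congr_app sq.w j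
  have sqa : CommSq (u.app WalkingSpan.left) (i.app WalkingSpan.left)
      (p.app WalkingSpan.left) (v.app WalkingSpan.left) := ⟨wl _⟩
  have w1 : (B.map WalkingSpan.Hom.fst ≫ sqa.lift) ≫ p.app WalkingSpan.left =
      v.app WalkingSpan.zero ≫ Y.map WalkingSpan.Hom.fst := by
    rw [Category.assoc, sqa.fac_right, v.naturality]
  have sqb : CommSq (u.app WalkingSpan.zero) (i.app WalkingSpan.zero) (spanFibCorner p)
      (pullback.lift (B.map WalkingSpan.Hom.fst ≫ sqa.lift) (v.app WalkingSpan.zero) w1) := ⟨by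
    apply pullback.hom_ext
    · simp only [spanFibCorner, Category.assoc, pullback.lift_fst]
      rw [← u.naturality]
      conv_lhs => rw [← sqa.fac_left]
      rw [i.naturality_assoc]
    · simp only [spanFibCorner, Category.assoc, pullback.lift_snd]
      exact wl _⟩
  have hb1 : sqb.lift ≫ X.map WalkingSpan.Hom.fst = B.map WalkingSpan.Hom.fst ≫ sqa.lift := by
    have h := congrArg (· ≫ pullback.fst (p.app WalkingSpan.left) (Y.map WalkingSpan.Hom.fst))
      sqb.fac_right
    simp only [spanFibCorner, Category.assoc, pullback.lift_fst] at h
    exact h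
  have hb2 : sqb.lift ≫ p.app WalkingSpan.zero = v.app WalkingSpan.zero := by
    have h := congrArg (· ≫ pullback.snd (p.app WalkingSpan.left) (Y.map WalkingSpan.Hom.fst))
      sqb.fac_right
    simp only [spanFibCorner, Category.assoc, pullback.lift_snd] at h
    exact h
  have wdesc : A.map WalkingSpan.Hom.snd ≫ u.app WalkingSpan.right =
      i.app WalkingSpan.zero ≫ sqb.lift ≫ X.map WalkingSpan.Hom.snd := by
    rw [← Category.assoc, sqb.fac_left, u.naturality]
  have sqc : CommSq (pushout.desc (u.app WalkingSpan.right)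
        (sqb.lift ≫ X.map WalkingSpan.Hom.snd) wdesc)
      (spanCofCorner i) (p.app WalkingSpan.right) (v.app WalkingSpan.right) := ⟨by
    apply pushout.hom_ext
    · simpa [spanCofCorner] using wl WalkingSpan.right
    · simp only [spanCofCorner, pushout.inr_desc_assoc, pushout.inr_desc, Category.assoc]
      rw [p.naturality, reassoc_of% hb2, ← v.naturality]⟩
  have hc1 : i.app WalkingSpan.right ≫ sqc.lift = u.app WalkingSpan.right := by
    have h := congrArg (pushout.inl (A.map WalkingSpan.Hom.snd) (i.app WalkingSpan.zero) ≫ ·)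
      sqc.fac_left
    simp only [spanCofCorner, pushout.inl_desc_assoc, pushout.inl_desc] at h
    exact h
  have hc2 : B.map WalkingSpan.Hom.snd ≫ sqc.lift = sqb.lift ≫ X.map WalkingSpan.Hom.snd := by
    have h := congrArg (pushout.inr (A.map WalkingSpan.Hom.snd) (i.app WalkingSpan.zero) ≫ ·)
      sqc.fac_left
    simp only [spanCofCorner, pushout.inr_desc_assoc, pushout.inr_desc] at h
    exact h
  refine ⟨⟨⟨mkNatTrans sqa.lift sqb.lift sqc.lift hb1.symm hc2, ?_, ?_⟩⟩⟩
  · ext j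
    rcases j with _ | j
    · exact sqb.fac_left
    · cases j
      · exact sqa.fac_left
      · exact hc1
  · ext j
    rcases j with _ | j
    · exact hb2
    · cases j
      · exact sqa.fac_right
      · exact sqc.fac_right

lemma lift_TCof_trivTFib {A B X Y : WalkingSpan ⥤ M} (i : A ⟶ B) (p : X ⟶ Y)
    (hi : TCof S i) (hp : TFib S p) (hp' : ∀ j, S.W (p.app j)) : HasLiftingProperty i p := by
  refine T_hasLiftingProperty i p ?_ ?_ ?_
  · exact S.lift_Cof_trivFib _ _ hi.1 (hp' _) hp.1
  · exact S.lift_Cof_trivFib _ _ hi.2.1 (S.spanFibCorner_w p hp (hp' _) (hp' _)) hp.2.2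
  · exact S.lift_Cof_trivFib _ _ hi.2.2 (hp' _) hp.2.1

lemma lift_trivTCof_TFib {A B X Y : WalkingSpan ⥤ M} (i : A ⟶ B) (p : X ⟶ Y)
    (hi : TCof S i) (hi' : ∀ j, S.W (i.app j)) (hp : TFib S p) : HasLiftingProperty i p := by
  refine T_hasLiftingProperty i p ?_ ?_ ?_
  · exact S.lift_trivCof_Fib _ _ hi.1 (hi' _) hp.1
  · exact S.lift_trivCof_Fib _ _ hi.2.1 (hi' _) hp.2.2
  · exact S.lift_trivCof_Fib _ _ hi.2.2 (S.spanCofCorner_w i hi (hi' _) (hi' _)) hp.2.1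

end Paper

namespace Paper

variable {M : Type u} [Category.{v} M] [HasPushouts M] [HasPullbacks M]
variable (S : ModelStructure M)

/-- Reedy factorization as a cofibration followed by a trivial fibration. -/
lemma T_fact_Cof_trivFib {X Y : WalkingSpan ⥤ M} (f : X ⟶ Y) :
    ∃ (Z : WalkingSpan ⥤ M) (i : X ⟶ Z) (p : Z ⟶ Y),
      TCof S i ∧ (∀ j, S.W (p.app j)) ∧ TFib S p ∧ i ≫ p = f := by
  obtain ⟨Za, ia, pa, hia, hpa1, hpa2, hfa⟩ := S.fact_Cof_trivFib (f.app WalkingSpan.left)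
  have wb : (X.map WalkingSpan.Hom.fst ≫ ia) ≫ pa =
      f.app WalkingSpan.zero ≫ Y.map WalkingSpan.Hom.fst := by
    rw [Category.assoc, hfa, f.naturality]
  obtain ⟨Zb, ib, qb, hib, hqb1, hqb2, hfb⟩ :=
    S.fact_Cof_trivFib
      (pullback.lift (X.map WalkingSpan.Hom.fst ≫ ia) (f.app WalkingSpan.zero) wb)
  have wc : X.map WalkingSpan.Hom.snd ≫ f.app WalkingSpan.right =
      ib ≫ (qb ≫ pullback.snd pa (Y.map WalkingSpan.Hom.fst)) ≫ Y.map WalkingSpan.Hom.snd := by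
    rw [← Category.assoc, ← Category.assoc, hfb, pullback.lift_snd, f.naturality]
  obtain ⟨Zc, jc, pc, hjc, hpc1, hpc2, hfc⟩ :=
    S.fact_Cof_trivFib (pushout.desc (f.app WalkingSpan.right)
      ((qb ≫ pullback.snd pa (Y.map WalkingSpan.Hom.fst)) ≫ Y.map WalkingSpan.Hom.snd) wc)
  obtain ⟨hsnd, hsnd'⟩ := S.trivFib_pullback_snd pa (Y.map WalkingSpan.Hom.fst) hpa2 hpa1
  refine ⟨span (qb ≫ pullback.fst pa (Y.map WalkingSpan.Hom.fst))
      (pushout.inr (X.map WalkingSpan.Hom.snd) ib ≫ jc),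
    mkNatTrans (X := X) (Y := span (qb ≫ pullback.fst pa (Y.map WalkingSpan.Hom.fst))
      (pushout.inr (X.map WalkingSpan.Hom.snd) ib ≫ jc))
      ia ib (pushout.inl (X.map WalkingSpan.Hom.snd) ib ≫ jc) ?_ ?_,
    mkNatTrans (X := span (qb ≫ pullback.fst pa (Y.map WalkingSpan.Hom.fst))
      (pushout.inr (X.map WalkingSpan.Hom.snd) ib ≫ jc)) (Y := Y)
      pa (qb ≫ pullback.snd pa (Y.map WalkingSpan.Hom.fst)) pc ?_ ?_,
    ?_, ?_, ?_, ?_⟩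
  · show X.map WalkingSpan.Hom.fst ≫ ia = ib ≫ qb ≫ pullback.fst pa (Y.map WalkingSpan.Hom.fst)
    rw [← Category.assoc, hfb, pullback.lift_fst]
  · show X.map WalkingSpan.Hom.snd ≫ pushout.inl (X.map WalkingSpan.Hom.snd) ib ≫ jc =
      ib ≫ pushout.inr (X.map WalkingSpan.Hom.snd) ib ≫ jc
    rw [← Category.assoc, pushout.condition, Category.assoc]
  · show (qb ≫ pullback.fst pa (Y.map WalkingSpan.Hom.fst)) ≫ pa =
      (qb ≫ pullback.snd pa (Y.map WalkingSpan.Hom.fst)) ≫ Y.map WalkingSpan.Hom.fst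
    rw [Category.assoc, Category.assoc, pullback.condition]
  · show (pushout.inr (X.map WalkingSpan.Hom.snd) ib ≫ jc) ≫ pc =
      (qb ≫ pullback.snd pa (Y.map WalkingSpan.Hom.fst)) ≫ Y.map WalkingSpan.Hom.snd
    rw [Category.assoc, hfc, pushout.inr_desc]
  · refine ⟨hia, hib, ?_⟩
    have hcorner : ∀ (h1 h2), spanCofCorner
        (mkNatTrans (X := X) (Y := span (qb ≫ pullback.fst pa (Y.map WalkingSpan.Hom.fst))
          (pushout.inr (X.map WalkingSpan.Hom.snd) ib ≫ jc))
          ia ib (pushout.inl (X.map WalkingSpan.Hom.snd) ib ≫ jc) h1 h2) = jc := by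
      intro h1 h2
      apply pushout.hom_ext
      · simp [spanCofCorner, mkNatTrans]
        exact pushout.inl_desc _ _ _
      · simp [spanCofCorner, span_map_snd, mkNatTrans]
        exact pushout.inr_desc _ _ _
    rw [hcorner]; exact hjc
  · intro j
    rcases j with _ | j
    · exact (S.trivFib_comp qb _ hqb2 hqb1 hsnd hsnd').2
    · cases j
      · exact hpa1
      · exact hpc1
  · refine ⟨hpa2, hpc2, ?_⟩
    have hcorner : ∀ (h1 h2), spanFibCorner
        (mkNatTrans (X := span (qb ≫ pullback.fst pa (Y.map WalkingSpan.Hom.fst))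
          (pushout.inr (X.map WalkingSpan.Hom.snd) ib ≫ jc)) (Y := Y)
          pa (qb ≫ pullback.snd pa (Y.map WalkingSpan.Hom.fst)) pc h1 h2) = qb := by
      intro h1 h2
      apply pullback.hom_ext
      · simp [spanFibCorner, span_map_fst, mkNatTrans]
        exact pullback.lift_fst _ _ _
      · simp [spanFibCorner, mkNatTrans]
        exact pullback.lift_snd _ _ _
    rw [hcorner]; exact hqb2
  · ext j
    rcases j with _ | j
    · show ib ≫ qb ≫ pullback.snd pa (Y.map WalkingSpan.Hom.fst) = f.app _
      rw [← Category.assoc, hfb, pullback.lift_snd]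
    · cases j
      · exact hfa
      · show (pushout.inl (X.map WalkingSpan.Hom.snd) ib ≫ jc) ≫ pc = f.app _
        rw [Category.assoc, hfc, pushout.inl_desc]

/-- Reedy factorization as a trivial cofibration followed by a fibration. -/
lemma T_fact_trivCof_Fib {X Y : WalkingSpan ⥤ M} (f : X ⟶ Y) :
    ∃ (Z : WalkingSpan ⥤ M) (i : X ⟶ Z) (p : Z ⟶ Y),
      TCof S i ∧ (∀ j, S.W (i.app j)) ∧ TFib S p ∧ i ≫ p = f := by
  obtain ⟨Za, ia, pa, hia, hia', hpa, hfa⟩ := S.fact_trivCof_Fib (f.app WalkingSpan.left)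
  have wb : (X.map WalkingSpan.Hom.fst ≫ ia) ≫ pa =
      f.app WalkingSpan.zero ≫ Y.map WalkingSpan.Hom.fst := by
    rw [Category.assoc, hfa, f.naturality]
  obtain ⟨Zb, ib, qb, hib, hib', hqb, hfb⟩ :=
    S.fact_trivCof_Fib
      (pullback.lift (X.map WalkingSpan.Hom.fst ≫ ia) (f.app WalkingSpan.zero) wb)
  have wc : X.map WalkingSpan.Hom.snd ≫ f.app WalkingSpan.right =
      ib ≫ (qb ≫ pullback.snd pa (Y.map WalkingSpan.Hom.fst)) ≫ Y.map WalkingSpan.Hom.snd := by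
    rw [← Category.assoc, ← Category.assoc, hfb, pullback.lift_snd, f.naturality]
  obtain ⟨Zc, jc, pc, hjc, hjc', hpc, hfc⟩ :=
    S.fact_trivCof_Fib (pushout.desc (f.app WalkingSpan.right)
      ((qb ≫ pullback.snd pa (Y.map WalkingSpan.Hom.fst)) ≫ Y.map WalkingSpan.Hom.snd) wc)
  obtain ⟨hinl, hinl'⟩ := S.trivCof_pushout_inl (X.map WalkingSpan.Hom.snd) ib hib hib'
  refine ⟨span (qb ≫ pullback.fst pa (Y.map WalkingSpan.Hom.fst))
      (pushout.inr (X.map WalkingSpan.Hom.snd) ib ≫ jc),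
    mkNatTrans (X := X) (Y := span (qb ≫ pullback.fst pa (Y.map WalkingSpan.Hom.fst))
      (pushout.inr (X.map WalkingSpan.Hom.snd) ib ≫ jc))
      ia ib (pushout.inl (X.map WalkingSpan.Hom.snd) ib ≫ jc) ?_ ?_,
    mkNatTrans (X := span (qb ≫ pullback.fst pa (Y.map WalkingSpan.Hom.fst))
      (pushout.inr (X.map WalkingSpan.Hom.snd) ib ≫ jc)) (Y := Y)
      pa (qb ≫ pullback.snd pa (Y.map WalkingSpan.Hom.fst)) pc ?_ ?_,
    ?_, ?_, ?_, ?_⟩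
  · show X.map WalkingSpan.Hom.fst ≫ ia = ib ≫ qb ≫ pullback.fst pa (Y.map WalkingSpan.Hom.fst)
    rw [← Category.assoc, hfb, pullback.lift_fst]
  · show X.map WalkingSpan.Hom.snd ≫ pushout.inl (X.map WalkingSpan.Hom.snd) ib ≫ jc =
      ib ≫ pushout.inr (X.map WalkingSpan.Hom.snd) ib ≫ jc
    rw [← Category.assoc, pushout.condition, Category.assoc]
  · show (qb ≫ pullback.fst pa (Y.map WalkingSpan.Hom.fst)) ≫ pa =
      (qb ≫ pullback.snd pa (Y.map WalkingSpan.Hom.fst)) ≫ Y.map WalkingSpan.Hom.fst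
    rw [Category.assoc, Category.assoc, pullback.condition]
  · show (pushout.inr (X.map WalkingSpan.Hom.snd) ib ≫ jc) ≫ pc =
      (qb ≫ pullback.snd pa (Y.map WalkingSpan.Hom.fst)) ≫ Y.map WalkingSpan.Hom.snd
    rw [Category.assoc, hfc, pushout.inr_desc]
  · refine ⟨hia, hib, ?_⟩
    have hcorner : ∀ (h1 h2), spanCofCorner
        (mkNatTrans (X := X) (Y := span (qb ≫ pullback.fst pa (Y.map WalkingSpan.Hom.fst))
          (pushout.inr (X.map WalkingSpan.Hom.snd) ib ≫ jc))
          ia ib (pushout.inl (X.map WalkingSpan.Hom.snd) ib ≫ jc) h1 h2) = jc := by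
      intro h1 h2
      apply pushout.hom_ext
      · simp [spanCofCorner, mkNatTrans]
        exact pushout.inl_desc _ _ _
      · simp [spanCofCorner, span_map_snd, mkNatTrans]
        exact pushout.inr_desc _ _ _
    rw [hcorner]; exact hjc
  · intro j
    rcases j with _ | j
    · exact hib'
    · cases j
      · exact hia'
      · exact (S.trivCof_comp _ jc hinl hinl' hjc hjc').2
  · refine ⟨hpa, hpc, ?_⟩
    have hcorner : ∀ (h1 h2), spanFibCorner
        (mkNatTrans (X := span (qb ≫ pullback.fst pa (Y.map WalkingSpan.Hom.fst))
          (pushout.inr (X.map WalkingSpan.Hom.snd) ib ≫ jc)) (Y := Y)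
          pa (qb ≫ pullback.snd pa (Y.map WalkingSpan.Hom.fst)) pc h1 h2) = qb := by
      intro h1 h2
      apply pullback.hom_ext
      · simp [spanFibCorner, span_map_fst, mkNatTrans]
        exact pullback.lift_fst _ _ _
      · simp [spanFibCorner, mkNatTrans]
        exact pullback.lift_snd _ _ _
    rw [hcorner]; exact hqb
  · ext j
    rcases j with _ | j
    · show ib ≫ qb ≫ pullback.snd pa (Y.map WalkingSpan.Hom.fst) = f.app _
      rw [← Category.assoc, hfb, pullback.lift_snd]
    · cases j
      · exact hfa
      · show (pushout.inl (X.map WalkingSpan.Hom.snd) ib ≫ jc) ≫ pc = f.app _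
        rw [Category.assoc, hfc, pushout.inl_desc]

/-! ### Identity corners are isomorphisms -/

lemma isIso_spanCofCorner_id (X : WalkingSpan ⥤ M) : IsIso (spanCofCorner (𝟙 X)) := by
  refine ⟨pushout.inl _ _, ?_, by simp [spanCofCorner]⟩
  apply pushout.hom_ext
  · simp [spanCofCorner]
  · simp [spanCofCorner, pushout.condition]

lemma isIso_spanFibCorner_id (X : WalkingSpan ⥤ M) : IsIso (spanFibCorner (𝟙 X)) := by
  refine ⟨pullback.snd _ _, by simp [spanFibCorner], ?_⟩
  apply pullback.hom_ext
  · simp [spanFibCorner, ← pullback.condition]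
  · simp [spanFibCorner]

lemma TCof_id (X : WalkingSpan ⥤ M) : TCof S (𝟙 X) := by
  refine ⟨?_, ?_, ?_⟩
  · rw [NatTrans.id_app]; exact S.cof_of_isIso _
  · rw [NatTrans.id_app]; exact S.cof_of_isIso _
  · haveI := isIso_spanCofCorner_id X; exact S.cof_of_isIso _

lemma TFib_id (X : WalkingSpan ⥤ M) : TFib S (𝟙 X) := by
  refine ⟨?_, ?_, ?_⟩
  · rw [NatTrans.id_app]; exact S.fib_of_isIso _
  · rw [NatTrans.id_app]; exact S.fib_of_isIso _
  · haveI := isIso_spanFibCorner_id X; exact S.fib_of_isIso _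

lemma TW_id (X : WalkingSpan ⥤ M) : TW S (𝟙 X) := fun j => by
  rw [NatTrans.id_app]; exact S.w_of_isIso _

/-! ### Cofibrant objects -/

/-- The constant diagram at the initial object is initial. -/
noncomputable def constBotIsInitial [HasInitial M] :
    IsInitial ((Functor.const WalkingSpan).obj (⊥_ M)) :=
  IsInitial.ofUniqueHom
    (fun Y => { app := fun _ => initial.to _, naturality := fun _ _ _ => initial.hom_ext _ _ })
    (fun Y m => by ext j; exact initial.hom_ext _ _)

lemma TCofibrant_iff [HasInitial M] (X : WalkingSpan ⥤ M) :
    TCof S (initial.to X) ↔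
      (S.Cofibrant (X.obj WalkingSpan.left) ∧ S.Cofibrant (X.obj WalkingSpan.zero) ∧
        S.Cof (X.map WalkingSpan.Hom.snd)) := by
  have hIj : ∀ j : WalkingSpan, IsInitial ((⊥_ (WalkingSpan ⥤ M)).obj j) := fun j =>
    IsInitial.ofIso initialIsInitial
      (((initialIsInitial.uniqueUpToIso (constBotIsInitial (M := M))).app j).symm)
  have comp_iff : ∀ j, S.Cof ((initial.to X).app j) ↔ S.Cof (initial.to (X.obj j)) := by
    intro j
    have e : ⊥_ M ≅ (⊥_ (WalkingSpan ⥤ M)).obj j := initialIsInitial.uniqueUpToIso (hIj j)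
    constructor
    · intro h
      have he : initial.to (X.obj j) = e.hom ≫ (initial.to X).app j := initial.hom_ext _ _
      rw [he]; exact S.cof_comp _ _ (S.cof_of_isIso _) h
    · intro h
      have he : (initial.to X).app j = e.inv ≫ initial.to (X.obj j) := (hIj j).hom_ext _ _
      rw [he]; exact S.cof_comp _ _ (S.cof_of_isIso _) h
  haveI : IsIso ((⊥_ (WalkingSpan ⥤ M)).map WalkingSpan.Hom.snd) :=
    isIso_of_isInitial (hIj _) (hIj _) _
  haveI hinr : IsIso (pushout.inr ((⊥_ (WalkingSpan ⥤ M)).map WalkingSpan.Hom.snd)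
      ((initial.to X).app WalkingSpan.zero)) := isIso_pushout_inr_of_isIso _ _
  have hsnd : pushout.inr _ _ ≫ spanCofCorner (initial.to X) =
      X.map WalkingSpan.Hom.snd := by simp [spanCofCorner]
  have corner_iff : S.Cof (spanCofCorner (initial.to X)) ↔
      S.Cof (X.map WalkingSpan.Hom.snd) := by
    constructor
    · intro h; rw [← hsnd]; exact S.cof_comp _ _ (S.cof_of_isIso _) h
    · intro h
      have he : spanCofCorner (initial.to X) =
          inv (pushout.inr _ _) ≫ X.map WalkingSpan.Hom.snd := by
        rw [← hsnd, IsIso.inv_hom_id_assoc]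
      rw [he]; exact S.cof_comp _ _ (S.cof_of_isIso _) h
  exact ⟨fun ⟨a, b, c⟩ => ⟨(comp_iff _).1 a, (comp_iff _).1 b, corner_iff.1 c⟩,
    fun ⟨a, b, c⟩ => ⟨(comp_iff _).2 a, (comp_iff _).2 b, corner_iff.2 c⟩⟩

/-! ### The constant functor preserves fibrations -/

lemma TFib_const {x y : M} (p : x ⟶ y) (hp : S.Fib p) :
    TFib S ((Functor.const WalkingSpan).map p) := by
  refine ⟨hp, hp, ?_⟩
  haveI : IsIso (spanFibCorner ((Functor.const WalkingSpan).map p)) := by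
    refine ⟨pullback.fst _ _, by simp [spanFibCorner], ?_⟩
    apply pullback.hom_ext
    · simp [spanFibCorner]
    · simp [spanFibCorner, pullback.condition]
  exact S.fib_of_isIso _

end Paper


section Statement16

open Paper

/-- **"Reedy trick".** Let `M` be a model category with pushouts and
pullbacks and let `J` be the walking span `a ← b → c`.  Then `Fun(J, M)` admits a model
structure with: weak equivalences the componentwise ones; cofibrations the maps `f` with
`f_a`, `f_b` cofibrations and the corner map `X_c ⊔_{X_b} Y_b → Y_c` a cofibration;
fibrations the maps `f` with `f_a`, `f_c` fibrations and `X_b → X_a ×_{Y_a} Y_b` a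
fibration.  Moreover an object is cofibrant iff `X_a`, `X_b` are cofibrant and
`X_b → X_c` is a cofibration, the constant functor preserves fibrations and trivial
fibrations, and `colim ⊣ const` is a Quillen adjunction. -/
theorem reedy_trick_walking_span
    {M : Type u} [Category.{v} M] [HasPushouts M] [HasPullbacks M] [HasInitial M]
    (S : ModelStructure M) :
    ∃ T : ModelStructure (WalkingSpan ⥤ M),
      (∀ {X Y : WalkingSpan ⥤ M} (f : X ⟶ Y), T.W f ↔ ∀ j, S.W (f.app j)) ∧
      (∀ {X Y : WalkingSpan ⥤ M} (f : X ⟶ Y), T.Cof f ↔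
        (S.Cof (f.app WalkingSpan.left) ∧ S.Cof (f.app WalkingSpan.zero) ∧
          S.Cof (spanCofCorner f))) ∧
      (∀ {X Y : WalkingSpan ⥤ M} (f : X ⟶ Y), T.Fib f ↔
        (S.Fib (f.app WalkingSpan.left) ∧ S.Fib (f.app WalkingSpan.right) ∧
          S.Fib (spanFibCorner f))) ∧
      (∀ X : WalkingSpan ⥤ M, T.Cofibrant X ↔
        (S.Cofibrant (X.obj WalkingSpan.left) ∧ S.Cofibrant (X.obj WalkingSpan.zero) ∧
          S.Cof (X.map WalkingSpan.Hom.snd))) ∧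
      (∀ {x y : M} (p : x ⟶ y), S.Fib p →
        T.Fib ((Functor.const WalkingSpan).map p)) ∧
      (∀ {x y : M} (p : x ⟶ y), S.Fib p → S.W p →
        T.Fib ((Functor.const WalkingSpan).map p) ∧
        T.W ((Functor.const WalkingSpan).map p)) ∧
      (∀ {X Y : WalkingSpan ⥤ M} (f : X ⟶ Y), T.Cof f →
        S.Cof ((colim (J := WalkingSpan) (C := M)).map f)) ∧
      (∀ {X Y : WalkingSpan ⥤ M} (f : X ⟶ Y), T.Cof f → T.W f →
        S.Cof ((colim (J := WalkingSpan) (C := M)).map f) ∧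
        S.W ((colim (J := WalkingSpan) (C := M)).map f)) := by
  have TCof_retract : ∀ {A B A' B' : WalkingSpan ⥤ M} (f : A ⟶ B) (g : A' ⟶ B'),
      IsRetract f g → TCof S g → TCof S f := fun f g hr hg =>
    ⟨S.retract_Cof _ _ (hr.app _) hg.1, S.retract_Cof _ _ (hr.app _) hg.2.1,
      S.retract_Cof _ _ (isRetract_spanCofCorner hr) hg.2.2⟩
  have TFib_retract : ∀ {A B A' B' : WalkingSpan ⥤ M} (f : A ⟶ B) (g : A' ⟶ B'),
      IsRetract f g → TFib S g → TFib S f := fun f g hr hg =>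
    ⟨S.retract_Fib _ _ (hr.app _) hg.1, S.retract_Fib _ _ (hr.app _) hg.2.1,
      S.retract_Fib _ _ (isRetract_spanFibCorner hr) hg.2.2⟩
  have TW_retract : ∀ {A B A' B' : WalkingSpan ⥤ M} (f : A ⟶ B) (g : A' ⟶ B'),
      IsRetract f g → TW S g → TW S f := fun f g hr hg j => S.retract_W _ _ (hr.app j) (hg j)
  refine ⟨{
      W := TW S
      Cof := TCof S
      Fib := TFib S
      iso_W := fun X Y f hf => by
        haveI : IsIso f := hf
        exact TW_retract f (𝟙 _) (isRetract_id_of_isIso f) (TW_id S _)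
      iso_Cof := fun X Y f hf => by
        haveI : IsIso f := hf
        exact TCof_retract f (𝟙 _) (isRetract_id_of_isIso f) (TCof_id S _)
      iso_Fib := fun X Y f hf => by
        haveI : IsIso f := hf
        exact TFib_retract f (𝟙 _) (isRetract_id_of_isIso f) (TFib_id S _)
      two_of_three := by
        haveI := S.two_of_three
        exact {
          comp_mem := fun f g hf hg j => by
            rw [NatTrans.comp_app]
            exact S.W.comp_mem _ _ (hf j) (hg j)
          of_postcomp := fun f g hg hfg j =>
            S.W.of_postcomp (f.app j) (g.app j) (hg j) (by simpa using hfg j)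
          of_precomp := fun f g hf hfg j =>
            S.W.of_precomp (f.app j) (g.app j) (hf j) (by simpa using hfg j) }
      retract_W := fun f g hr => TW_retract f g hr
      retract_Cof := fun f g hr => TCof_retract f g hr
      retract_Fib := fun f g hr => TFib_retract f g hr
      lift_Cof_trivFib := fun i p hi hw hf => lift_TCof_trivTFib S i p hi hf hw
      lift_trivCof_Fib := fun i p hi hw hf => lift_trivTCof_TFib S i p hi hw hf
      fact_Cof_trivFib := fun f => T_fact_Cof_trivFib S f
      fact_trivCof_Fib := fun f => T_fact_trivCof_Fib S f },
    fun f => Iff.rfl, fun f => Iff.rfl, fun f => Iff.rfl,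
    fun X => TCofibrant_iff S X,
    fun p hp => TFib_const S p hp,
    fun p hp hw => ⟨TFib_const S p hp, fun j => hw⟩,
    ?_, ?_⟩
  · intro X Y f hf
    refine S.cof_of_llp _ (fun p hw hfib => ?_)
    rw [Adjunction.hasLiftingProperty_iff Limits.colimConstAdj]
    exact lift_TCof_trivTFib S f _ hf (TFib_const S p hfib) (fun j => hw)
  · intro X Y f hf hw
    refine S.trivCof_of_llp _ (fun p hfib => ?_)
    rw [Adjunction.hasLiftingProperty_iff Limits.colimConstAdj]
    exact lift_trivTCof_TFib S f _ hf hw (TFib_const S p hfib)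

end Statement16
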